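/- Let p > 2 and q ≥ 1. For all real numbers a, b, one has J_q(a-b)·(J_p(a)-J_p(b)) ≥ (p-1)·(q/(p-2+q))^q · | |a|^((p-2)/q)·a - |b|^((p-2)/q)·b |^q, where J_r(t) = |t|^(r-2)·t. -/

import Mathlib

open Real

lemma hasDerivAt_absrpow (c : ℝ) (hc : 0 < c) (x : ℝ) :
    HasDerivAt (fun t : ℝ => |t| ^ c * t) ((c + 1) * |x| ^ c) x := by
  rcases lt_trichotomy x 0 with hx | hx | hx
  · have h1 : HasDerivAt (fun t : ℝ => -((-t) ^ (c + 1))) ((c + 1) * (-x) ^ c) x := by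
      have h2 : HasDerivAt (fun t : ℝ => (-t) ^ (c + 1))
          ((c + 1) * (-x) ^ (c + 1 - 1) * (-1)) x :=
        (Real.hasDerivAt_rpow_const (Or.inl (by linarith))).comp x (hasDerivAt_neg x)
      have := h2.neg
      simp only [add_sub_cancel_right] at this
      exact this.congr_deriv (by ring)
    rw [abs_of_neg hx]
    refine h1.congr_of_eventuallyEq ?_
    filter_upwards [eventually_lt_nhds hx] with t ht
    rw [abs_of_neg ht, Real.rpow_add_one (by linarith : (-t) ≠ 0)]
    ring
  · subst hx
    rw [abs_zero, Real.zero_rpow hc.ne', mul_zero]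
    rw [hasDerivAt_iff_tendsto_slope]
    have : (slope (fun t : ℝ => |t| ^ c * t) 0) =ᶠ[nhdsWithin 0 {(0:ℝ)}ᶜ]
        fun t => |t| ^ c := by
      filter_upwards [self_mem_nhdsWithin] with t ht
      simp only [Set.mem_compl_iff, Set.mem_singleton_iff] at ht
      rw [slope_def_field]
      field_simp
      simp
    rw [Filter.tendsto_congr' this]
    have hcont : Filter.Tendsto (fun t : ℝ => |t| ^ c) (nhds 0) (nhds 0) := by
      have : Filter.Tendsto (fun y : ℝ => y ^ c) (nhds 0) (nhds ((0:ℝ) ^ c)) :=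
        (Real.continuousAt_rpow_const 0 c (Or.inr hc.le)).tendsto
      rw [Real.zero_rpow hc.ne'] at this
      exact this.comp (by simpa using continuous_abs.tendsto (0:ℝ))
    exact hcont.mono_left nhdsWithin_le_nhds
  · have h1 : HasDerivAt (fun t : ℝ => t ^ (c + 1)) ((c + 1) * x ^ c) x := by
      have := Real.hasDerivAt_rpow_const (p := c + 1) (x := x) (Or.inl hx.ne')
      simpa using this
    rw [abs_of_pos hx]
    refine h1.congr_of_eventuallyEq ?_
    filter_upwards [eventually_gt_nhds hx] with t ht
    rw [abs_of_pos ht, Real.rpow_add_one ht.ne']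

lemma ftc_absrpow (c : ℝ) (hc : 0 < c) (a b : ℝ) :
    |a| ^ c * a - |b| ^ c * b = ∫ t in b..a, (c + 1) * |t| ^ c := by
  have hcont : Continuous fun t : ℝ => (c + 1) * |t| ^ c :=
    continuous_const.mul (continuous_abs.rpow_const fun x => Or.inr hc.le)
  exact (intervalIntegral.integral_eq_sub_of_hasDerivAt
    (fun x _ => hasDerivAt_absrpow c hc x) (hcont.intervalIntegrable b a)).symm

lemma jensen_icc (c q a b : ℝ) (hc : 0 < c) (hq : 1 ≤ q) (hab : b < a) :
    (∫ t in Set.Icc b a, |t| ^ c) ^ q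
      ≤ (a - b) ^ (q - 1) * ∫ t in Set.Icc b a, |t| ^ (c * q) := by
  have hq0 : 0 < q := lt_of_lt_of_le zero_lt_one hq
  have hba : 0 < a - b := sub_pos.mpr hab
  have hvol : MeasureTheory.volume (Set.Icc b a) = ENNReal.ofReal (a - b) :=
    Real.volume_Icc
  have h0 : MeasureTheory.volume (Set.Icc b a) ≠ 0 := by
    rw [hvol]; simp [ENNReal.ofReal_eq_zero]; linarith
  have htop : MeasureTheory.volume (Set.Icc b a) ≠ ⊤ := by
    rw [hvol]; exact ENNReal.ofReal_ne_top
  have hfc : Continuous fun t : ℝ => |t| ^ c :=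
    continuous_abs.rpow_const fun x => Or.inr hc.le
  have hgc : Continuous fun t : ℝ => |t| ^ (c * q) :=
    continuous_abs.rpow_const fun x => Or.inr (by positivity)
  have hcomp : ∀ t : ℝ, (|t| ^ c) ^ q = |t| ^ (c * q) := fun t =>
    (Real.rpow_mul (abs_nonneg t) c q).symm
  have key := (convexOn_rpow hq).map_set_average_le
    (f := fun t : ℝ => |t| ^ c) (t := Set.Icc b a) (μ := MeasureTheory.volume)
    (fun x hx => (Real.continuousAt_rpow_const x q (Or.inr hq0.le)).continuousWithinAt)
    isClosed_Ici h0 htop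
    (Filter.Eventually.of_forall fun x => Real.rpow_nonneg (abs_nonneg x) c)
    (hfc.integrableOn_Icc)
    (by
      have : ((fun x : ℝ => x ^ q) ∘ fun t : ℝ => |t| ^ c) = fun t : ℝ => |t| ^ (c * q) := by
        funext t; exact hcomp t
      rw [this]; exact hgc.integrableOn_Icc)
  rw [MeasureTheory.setAverage_eq, MeasureTheory.setAverage_eq, MeasureTheory.measureReal_def, hvol,
    ENNReal.toReal_ofReal hba.le, smul_eq_mul, smul_eq_mul] at key
  have hI1 : 0 ≤ ∫ t in Set.Icc b a, |t| ^ c :=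
    MeasureTheory.setIntegral_nonneg measurableSet_Icc
      (fun x _ => Real.rpow_nonneg (abs_nonneg x) c)
  set I1 := ∫ t in Set.Icc b a, |t| ^ c
  have hre : ∫ x in Set.Icc b a, (|x| ^ c) ^ q = ∫ t in Set.Icc b a, |t| ^ (c * q) := by
    apply MeasureTheory.integral_congr_ae
    exact Filter.Eventually.of_forall fun t => hcomp t
  rw [hre] at key
  set I2 := ∫ t in Set.Icc b a, |t| ^ (c * q)
  have hmul : ((a - b)⁻¹ * I1) ^ q = ((a - b)⁻¹) ^ q * I1 ^ q :=
    Real.mul_rpow (by positivity) hI1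
  rw [hmul] at key
  have h2 : ((a - b)⁻¹) ^ q = ((a - b) ^ q)⁻¹ := Real.inv_rpow hba.le q ▸ rfl
  rw [h2] at key
  have hq' : (0:ℝ) < (a - b) ^ q := Real.rpow_pos_of_pos hba q
  have := mul_le_mul_of_nonneg_left key hq'.le
  rw [mul_inv_cancel_left₀ hq'.ne'] at this
  calc I1 ^ q ≤ (a - b) ^ q * ((a - b)⁻¹ * I2) := this
    _ = (a - b) ^ (q - 1) * I2 := by
        rw [Real.rpow_sub hba, Real.rpow_one]; field_simp

/-- `J r t = |t|^(r-2) · t`. -/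
noncomputable def J (r t : ℝ) : ℝ := |t| ^ (r - 2) * t

lemma key (p q a b : ℝ) (hp : 2 < p) (hq : 1 ≤ q) (hab : b < a) :
    (p - 1) * (q / (p - 2 + q)) ^ q *
        |(|a| ^ ((p - 2) / q) * a - |b| ^ ((p - 2) / q) * b)| ^ q
      ≤ J q (a - b) * (J p a - J p b) := by
  have hq0 : 0 < q := lt_of_lt_of_le zero_lt_one hq
  have hba : 0 < a - b := sub_pos.mpr hab
  have hc : 0 < (p - 2) / q := div_pos (by linarith) hq0
  set c : ℝ := (p - 2) / q with hcdef
  have hcq : c * q = p - 2 := div_mul_cancel₀ _ hq0.ne'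
  set I1 := ∫ t in Set.Icc b a, |t| ^ c with hI1def
  set I2 := ∫ t in Set.Icc b a, |t| ^ (p - 2) with hI2def
  have hI1 : 0 ≤ I1 :=
    MeasureTheory.setIntegral_nonneg measurableSet_Icc
      (fun x _ => Real.rpow_nonneg (abs_nonneg x) c)
  have hI2 : 0 ≤ I2 :=
    MeasureTheory.setIntegral_nonneg measurableSet_Icc
      (fun x _ => Real.rpow_nonneg (abs_nonneg x) (p - 2))
  have e1 : |a| ^ c * a - |b| ^ c * b = (c + 1) * I1 := by
    rw [ftc_absrpow c hc a b, intervalIntegral.integral_const_mul,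
      intervalIntegral.integral_of_le hab.le, hI1def,
      MeasureTheory.integral_Icc_eq_integral_Ioc]
  have e2 : J p a - J p b = (p - 1) * I2 := by
    have := ftc_absrpow (p - 2) (by linarith) a b
    rw [show (p:ℝ) - 2 + 1 = p - 1 from by ring] at this
    rw [J, J, this, intervalIntegral.integral_const_mul,
      intervalIntegral.integral_of_le hab.le, hI2def,
      MeasureTheory.integral_Icc_eq_integral_Ioc]
  have jens : I1 ^ q ≤ (a - b) ^ (q - 1) * I2 := by
    have := jensen_icc c q a b hc hq hab
    rwa [hcq] at this
  have hJq : J q (a - b) = (a - b) ^ (q - 1) := by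
    show |a - b| ^ (q - 2) * (a - b) = _
    rw [abs_of_pos hba, show (q:ℝ) - 1 = (q - 2) + 1 from by ring,
      Real.rpow_add_one hba.ne']
  have habs : |(|a| ^ c * a - |b| ^ c * b)| = (c + 1) * I1 := by
    rw [e1, abs_of_nonneg (by positivity)]
  have hpq : (0:ℝ) < p - 2 + q := by linarith
  have hgam : q / (p - 2 + q) * (c + 1) = 1 := by
    rw [hcdef]; field_simp
  have hgamnn : 0 ≤ q / (p - 2 + q) := by positivity
  rw [habs, hJq, e2, Real.mul_rpow (by linarith : (0:ℝ) ≤ c + 1) hI1]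
  calc (p - 1) * (q / (p - 2 + q)) ^ q * ((c + 1) ^ q * I1 ^ q)
      = (p - 1) * ((q / (p - 2 + q)) * (c + 1)) ^ q * I1 ^ q := by
        rw [Real.mul_rpow hgamnn (by linarith : (0:ℝ) ≤ c + 1)]; ring
    _ = (p - 1) * I1 ^ q := by rw [hgam, Real.one_rpow, mul_one]
    _ ≤ (p - 1) * ((a - b) ^ (q - 1) * I2) := by
        apply mul_le_mul_of_nonneg_left jens (by linarith)
    _ = (a - b) ^ (q - 1) * ((p - 1) * I2) := by ring

lemma J_neg (r t : ℝ) : J r (-t) = - J r t := by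
  simp [J, abs_neg, mul_neg]

theorem stmt0 (p q a b : ℝ) (hp : 2 < p) (hq : 1 ≤ q) :
    (p - 1) * (q / (p - 2 + q)) ^ q *
        |(|a| ^ ((p - 2) / q) * a - |b| ^ ((p - 2) / q) * b)| ^ q
      ≤ J q (a - b) * (J p a - J p b) := by
  have hq0 : 0 < q := lt_of_lt_of_le zero_lt_one hq
  rcases lt_trichotomy b a with hab | hab | hab
  · exact key p q a b hp hq hab
  · subst hab
    simp [J, sub_self, Real.zero_rpow hq0.ne']
  · have h := key p q b a hp hq hab
    rw [show a - b = -(b - a) from by ring, J_neg, abs_sub_comm,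
      show -J q (b - a) * (J p a - J p b) = J q (b - a) * (J p b - J p a) from by ring]
    exact h
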